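/- On the elliptic curve $y^2 + (c^2 + 5)xy + y = x^3$ over $\mathbb{Q}(c)$, the point $(0,0)$ has exact order $3$, and the point $P = \left(-\tfrac{1}{4}(c^4+c^2+1),\ \tfrac{1}{8}(c^2-c+1)^3\right)$ lies on the curve and has infinite order. -/

import Mathlib

noncomputable section

/-- The elliptic curve `y² + (c² + 5)xy + y = x³` over `ℚ(c)`. -/
def W13 : WeierstrassCurve.Affine (RatFunc ℚ) :=
  { a₁ := RatFunc.X ^ 2 + 5, a₂ := 0, a₃ := 1, a₄ := 0, a₆ := 0 }

open Polynomial IsDedekindDomain IsDedekindDomain.HeightOneSpectrum Multiplicative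
  WeierstrassCurve.Affine WeierstrassCurve.Affine.Point

namespace Stmt13Aux

open Classical

abbrev K : Type := RatFunc ℚ

instance : CharZero K :=
  charZero_of_injective_algebraMap (algebraMap ℚ K).injective

/-! ### The place `π = c² + c + 1` of `ℚ(c)` and its valuation -/

def pp : Polynomial ℚ := X ^ 2 + X + 1

lemma pp_natDegree : pp.natDegree = 2 := by unfold pp; compute_degree!

lemma pp_ne_zero : pp ≠ 0 := fun h => by simpa [pp_natDegree] using congrArg natDegree h

lemma pp_irred : Irreducible pp := by
  rw [Polynomial.irreducible_iff_roots_eq_zero_of_degree_le_three (by rw [pp_natDegree])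
    (by rw [pp_natDegree]; norm_num)]
  rw [Multiset.eq_zero_iff_forall_notMem]
  intro a ha
  rw [mem_roots pp_ne_zero, IsRoot.def, pp] at ha
  simp only [eval_add, eval_pow, eval_X, eval_one] at ha
  nlinarith [sq_nonneg (a + 1/2)]

lemma pp_prime : Prime pp := pp_irred.prime

def vp : HeightOneSpectrum (Polynomial ℚ) where
  asIdeal := Ideal.span {pp}
  isPrime := (Ideal.span_singleton_prime pp_ne_zero).mpr pp_prime
  ne_bot := by rw [ne_eq, Ideal.span_singleton_eq_bot]; exact pp_ne_zero

def v : Valuation K (WithZero (Multiplicative ℤ)) := vp.valuation K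

def φ : Polynomial ℚ →+* K := algebraMap (Polynomial ℚ) K

def γ : WithZero (Multiplicative ℤ) := v (φ pp)

lemma gamma_eq : γ = v (φ pp) := rfl

lemma v_poly_le_one (p : Polynomial ℚ) : v (φ p) ≤ 1 := valuation_le_one (K := K) vp p

lemma v_poly_eq_one {p : Polynomial ℚ} (h : ¬ pp ∣ p) : v (φ p) = 1 := by
  rcases lt_or_eq_of_le (v_poly_le_one p) with hlt | he
  · exfalso
    have hdvd := (valuation_lt_one_iff_dvd (K := K) vp p).mp hlt
    rw [Ideal.dvd_span_singleton, show vp.asIdeal = Ideal.span {pp} from rfl,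
      Ideal.mem_span_singleton] at hdvd
    exact h hdvd
  · exact he

lemma gamma_lt_one : γ < 1 := by
  have : vp.valuation K (algebraMap (Polynomial ℚ) K pp) < 1 := by
    rw [valuation_lt_one_iff_dvd, Ideal.dvd_span_singleton,
      show vp.asIdeal = Ideal.span {pp} from rfl]
    exact Ideal.mem_span_singleton.mpr (dvd_refl pp)
  exact this

lemma gamma_le_one : γ ≤ 1 := gamma_lt_one.le

lemma not_pp_dvd_C {q : ℚ} (hq : q ≠ 0) : ¬ pp ∣ C q := by
  intro h
  have := Polynomial.degree_le_of_dvd h (by simpa using hq)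
  rw [degree_C hq] at this
  have h2 : pp.degree = 2 := by
    rw [Polynomial.degree_eq_natDegree pp_ne_zero, pp_natDegree]; rfl
  rw [h2] at this
  exact absurd this (by norm_num)

lemma cast_eq_phiC (q : ℚ) : algebraMap ℚ K q = φ (C q) := by
  rw [IsScalarTower.algebraMap_apply ℚ (Polynomial ℚ) K]
  rfl

lemma v_const {q : ℚ} (hq : q ≠ 0) : v (algebraMap ℚ K q) = 1 := by
  rw [cast_eq_phiC]; exact v_poly_eq_one (not_pp_dvd_C hq)

lemma v_const_le (q : ℚ) : v (algebraMap ℚ K q) ≤ 1 := by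
  rw [cast_eq_phiC]; exact v_poly_le_one _

/-! ### elements that are `q + O(π)` -/

def Ok (f : K) (q : ℚ) : Prop := v (f - algebraMap ℚ K q) ≤ γ

lemma Ok.le_one {f q} (h : Ok f q) : v f ≤ 1 := by
  have : f = (f - algebraMap ℚ K q) + algebraMap ℚ K q := by ring
  rw [this]
  exact le_trans (v.map_add _ _) (max_le (le_trans h gamma_le_one) (v_const_le q))

lemma Ok.v_eq_one {f q} (h : Ok f q) (hq : q ≠ 0) : v f = 1 := by
  have : f = algebraMap ℚ K q + (f - algebraMap ℚ K q) := by ring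
  rw [this, Valuation.map_add_eq_of_lt_left]
  · exact v_const hq
  · rw [v_const hq]; exact lt_of_le_of_lt h gamma_lt_one

lemma Ok.ne_zero {f q} (h : Ok f q) (hq : q ≠ 0) : f ≠ 0 := by
  intro h0
  have := h.v_eq_one hq
  rw [h0] at this
  simp at this

lemma ok_of_le {f : K} (h : v f ≤ γ) : Ok f 0 := by simpa [Ok]

lemma ok_const (q : ℚ) : Ok (algebraMap ℚ K q) q := by
  rw [Ok, sub_self]
  simpa using zero_le'

lemma Ok.add {f g q r} (hf : Ok f q) (hg : Ok g r) : Ok (f + g) (q + r) := by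
  have : f + g - algebraMap ℚ K (q + r)
      = (f - algebraMap ℚ K q) + (g - algebraMap ℚ K r) := by
    rw [map_add]; ring
  rw [Ok, this]
  exact v.map_add_le hf hg

lemma Ok.neg {f q} (hf : Ok f q) : Ok (-f) (-q) := by
  have : -f - algebraMap ℚ K (-q) = -(f - algebraMap ℚ K q) := by rw [map_neg]; ring
  rw [Ok, this, Valuation.map_neg]
  exact hf

lemma Ok.sub {f g q r} (hf : Ok f q) (hg : Ok g r) : Ok (f - g) (q - r) := by
  have := hf.add hg.neg
  simpa [sub_eq_add_neg] using this

lemma Ok.mul {f g q r} (hf : Ok f q) (hg : Ok g r) : Ok (f * g) (q * r) := by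
  have key : f * g - algebraMap ℚ K (q * r)
      = f * (g - algebraMap ℚ K r) + (f - algebraMap ℚ K q) * algebraMap ℚ K r := by
    rw [map_mul]; ring
  rw [Ok, key]
  refine v.map_add_le ?_ ?_
  · rw [Valuation.map_mul]
    calc v f * v (g - algebraMap ℚ K r) ≤ 1 * γ := mul_le_mul' hf.le_one hg
    _ = γ := one_mul γ
  · rw [Valuation.map_mul]
    calc v (f - algebraMap ℚ K q) * v (algebraMap ℚ K r) ≤ γ * 1 :=
      mul_le_mul' hf (v_const_le r)
    _ = γ := mul_one γ

lemma Ok.div {f g q r} (hf : Ok f q) (hg : Ok g r) (hr : r ≠ 0) : Ok (f / g) (q / r) := by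
  have hvg : v g = 1 := hg.v_eq_one hr
  have hg0 : g ≠ 0 := hg.ne_zero hr
  have hr0 : algebraMap ℚ K r ≠ 0 :=
    fun h => hr ((algebraMap ℚ K).injective (by rw [h, _root_.map_zero]))
  have key : f / g - algebraMap ℚ K (q / r)
      = (f * algebraMap ℚ K r - g * algebraMap ℚ K q) / (g * algebraMap ℚ K r) := by
    rw [map_div₀]
    exact div_sub_div f _ hg0 hr0
  rw [Ok, key, map_div₀]
  have hrw : f * algebraMap ℚ K r - g * algebraMap ℚ K q
      = (f - algebraMap ℚ K q) * algebraMap ℚ K r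
        - (g - algebraMap ℚ K r) * algebraMap ℚ K q := by ring
  have hnum : v (f * algebraMap ℚ K r - g * algebraMap ℚ K q) ≤ γ := by
    rw [hrw]
    refine v.map_sub_le ?_ ?_
    · rw [Valuation.map_mul]
      calc v (f - algebraMap ℚ K q) * v (algebraMap ℚ K r) ≤ γ * 1 :=
        mul_le_mul' hf (v_const_le r)
      _ = γ := mul_one γ
    · rw [Valuation.map_mul]
      calc v (g - algebraMap ℚ K r) * v (algebraMap ℚ K q) ≤ γ * 1 :=
        mul_le_mul' hg (v_const_le q)
      _ = γ := mul_one γ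
  have hden : v (g * algebraMap ℚ K r) = 1 := by
    rw [Valuation.map_mul, hvg, v_const hr, one_mul]
  rw [hden, div_one]
  exact hnum

lemma Ok.congr {f g : K} {q r : ℚ} (h : Ok f q) (hfg : f = g) (hqr : q = r) : Ok g r := by
  rw [← hfg, ← hqr]; exact h

lemma ok_small_mul {A B c : K} (hA : v A ≤ 1) (hB : v B ≤ 1) (hc : v c ≤ γ) :
    Ok (A * (B * c)) 0 := by
  refine ok_of_le ?_
  rw [Valuation.map_mul, Valuation.map_mul]
  calc v A * (v B * v c) ≤ 1 * (1 * γ) := mul_le_mul' hA (mul_le_mul' hB hc)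
  _ = γ := by rw [one_mul, one_mul]

/-! ### the base point `R = P + (0,0)` and its coordinates -/

def uu : Polynomial ℚ := X ^ 2 - X + 1
def gg : Polynomial ℚ := X ^ 4 - 4 * X ^ 3 + 9 * X ^ 2 - 12 * X + 9

def x0 : K := φ (-2 * uu) / φ (pp ^ 2)
def y0 : K := φ 8 / φ (pp ^ 3)
def t0 : K := x0 / y0

lemma phi_ne {p : Polynomial ℚ} (h : p ≠ 0) : φ p ≠ 0 := RatFunc.algebraMap_ne_zero h

lemma ne_zero_of_eval {p : Polynomial ℚ} (h : p.eval 0 ≠ 0) : p ≠ 0 :=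
  fun hc => h (by rw [hc]; simp)

lemma uu_ne_zero : uu ≠ 0 := ne_zero_of_eval (by norm_num [uu])

lemma eight_eq : (8 : Polynomial ℚ) = C (8 : ℚ) := (map_ofNat C 8).symm
lemma four_eq : (4 : Polynomial ℚ) = C (4 : ℚ) := (map_ofNat C 4).symm

lemma hp2 : φ (pp ^ 2) ≠ 0 := phi_ne (pow_ne_zero 2 pp_ne_zero)
lemma hp3 : φ (pp ^ 3) ≠ 0 := phi_ne (pow_ne_zero 3 pp_ne_zero)
lemma h4 : φ 4 ≠ 0 := phi_ne (by norm_num)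
lemma h8 : φ 8 ≠ 0 := phi_ne (by norm_num)

lemma x0_ne_zero : x0 ≠ 0 := by
  rw [x0]
  exact div_ne_zero (phi_ne (mul_ne_zero (by norm_num) uu_ne_zero)) hp2

lemma y0_ne_zero : y0 ≠ 0 := by
  rw [y0]
  exact div_ne_zero (phi_ne (by norm_num)) hp3

lemma t0_ne_zero : t0 ≠ 0 := div_ne_zero x0_ne_zero y0_ne_zero

lemma ht0 : t0 = φ (pp * (-uu)) / φ 4 := by
  rw [t0, div_eq_iff y0_ne_zero, y0, div_mul_div_comm, x0,
    div_eq_div_iff hp2 (mul_ne_zero h4 hp3)]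
  rw [← map_mul, ← map_mul, ← map_mul, ← map_mul]
  exact congrArg φ (by ring)

lemma v_frac_le_gamma {a b : Polynomial ℚ} (hb : ¬ pp ∣ b) : v (φ (pp * a) / φ b) ≤ γ := by
  rw [map_div₀, map_mul, Valuation.map_mul, v_poly_eq_one hb, div_one, gamma_eq]
  calc v (φ pp) * v (φ a) ≤ v (φ pp) * 1 := mul_le_mul' le_rfl (v_poly_le_one a)
  _ = v (φ pp) := mul_one _

lemma v_t0_le : v t0 ≤ γ := by
  rw [ht0]
  exact v_frac_le_gamma (by rw [four_eq]; exact not_pp_dvd_C (by norm_num))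

lemma ok_t03 : Ok (t0 ^ 3) 0 := by
  refine ok_of_le ?_
  rw [show t0 ^ 3 = t0 * (t0 * t0) by ring, Valuation.map_mul, Valuation.map_mul]
  refine le_trans (mul_le_mul' (le_trans v_t0_le gamma_le_one)
    (mul_le_mul' (le_trans v_t0_le gamma_le_one) v_t0_le)) ?_
  rw [one_mul, one_mul]

lemma ok_of_frac {f : K} {q : ℚ} {a b : Polynomial ℚ}
    (hid : f - algebraMap ℚ K q = φ (pp * a) / φ b) (hb : ¬ pp ∣ b) : Ok f q := by
  rw [Ok, hid]
  exact v_frac_le_gamma hb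

lemma y0t03_eq : y0 * t0 ^ 3 = x0 * t0 ^ 2 := by
  rw [t0, div_pow, div_pow, ← mul_div_assoc, ← mul_div_assoc,
    div_eq_div_iff (pow_ne_zero 3 y0_ne_zero) (pow_ne_zero 2 y0_ne_zero)]
  ring

lemma okX1 : Ok (x0 * t0 ^ 2) 1 := by
  refine ok_of_frac (a := -gg) (b := 8) ?_ (by rw [eight_eq]; exact not_pp_dvd_C (by norm_num))
  have hden : φ (pp ^ 2) * φ 4 ^ 2 ≠ 0 := mul_ne_zero hp2 (pow_ne_zero 2 h4)
  rw [map_one, x0, ht0, div_pow, div_mul_div_comm, div_sub_one hden,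
    div_eq_div_iff hden h8]
  rw [← map_pow, ← map_pow, ← map_mul, ← map_mul, ← map_sub, ← map_mul, ← map_mul]
  exact congrArg φ (by rw [pp, uu, gg]; ring)

lemma okY1 : Ok (y0 * t0 ^ 3) 1 := by rw [y0t03_eq]; exact okX1

/-! ### curve facts -/

lemma a1_eq : W13.a₁ = φ (X ^ 2 + 5) := by
  simp [W13, φ, map_add, map_pow, map_ofNat, RatFunc.algebraMap_X]

lemma a2_eq : W13.a₂ = 0 := rfl
lemma a3_eq : W13.a₃ = 1 := rfl
lemma a4_eq : W13.a₄ = 0 := rfl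
lemma a6_eq : W13.a₆ = 0 := rfl

lemma v_a1_le : v W13.a₁ ≤ 1 := by rw [a1_eq]; exact v_poly_le_one _

lemma eqn_of {x y : K} (h : W13.Equation x y) :
    y ^ 2 + W13.a₁ * x * y + y = x ^ 3 := by
  have := (W13.equation_iff x y).mp h
  rw [a2_eq, a3_eq, a4_eq, a6_eq] at this
  linear_combination this

lemma some_eq_some {x y x' y' : K} (hx : x = x') (hy : y = y') (h : W13.Nonsingular x y) :
    Point.some _ _ h = Point.some _ _ (hx ▸ hy ▸ h) := by
  subst hx; subst hy; rfl

/-! ### rational-number identities for the induction -/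

lemma qlem1 {n : ℚ} (h0 : 0 < n) :
    (1 / n ^ 2 * (1 / n ^ 2) + 1 / n ^ 2 * 1 + 1 * 1 - 0) / (1 / n ^ 3 + 1 + 0 + 0)
      * ((1 / n ^ 2 * (1 / n ^ 2) + 1 / n ^ 2 * 1 + 1 * 1 - 0) / (1 / n ^ 3 + 1 + 0 + 0)) + 0
      - 1 / n ^ 2 - 1 = 1 / (n + 1) ^ 2 := by
  have hn : n ≠ 0 := ne_of_gt h0
  have hn1 : n + 1 ≠ 0 := by positivity
  have hd : 1 / n ^ 3 + 1 + 0 + 0 ≠ 0 := by positivity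
  field_simp
  ring

lemma qlem2 {n : ℚ} (h0 : 0 < n) :
    -((1 / n ^ 2 * (1 / n ^ 2) + 1 / n ^ 2 * 1 + 1 * 1 - 0) / (1 / n ^ 3 + 1 + 0 + 0)
        * (1 / (n + 1) ^ 2 - 1 / n ^ 2)) - 1 / n ^ 3 - 0 - 0 = 1 / (n + 1) ^ 3 := by
  have hn : n ≠ 0 := ne_of_gt h0
  have hn1 : n + 1 ≠ 0 := by positivity
  have hd : 1 / n ^ 3 + 1 + 0 + 0 ≠ 0 := by positivity
  field_simp
  ring

/-! ### the key induction -/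

theorem key (hR : W13.Nonsingular x0 y0) :
    ∀ n : ℕ, 1 ≤ n → ∃ (x y : K) (h : W13.Nonsingular x y),
      (n • (Point.some _ _ hR) = Point.some _ _ h) ∧
        Ok (x * t0 ^ 2) (1 / (n : ℚ) ^ 2) ∧ Ok (y * t0 ^ 3) (1 / (n : ℚ) ^ 3) := by
  intro n hn
  induction n, hn using Nat.le_induction with
  | base =>
    refine ⟨x0, y0, hR, one_nsmul _, ?_, ?_⟩
    · simpa using okX1
    · simpa using okY1
  | succ n hn ih =>
    obtain ⟨x, y, h, hsm, okX, okY⟩ := ih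
    have hnq : (0 : ℚ) < (n : ℚ) := by exact_mod_cast lt_of_lt_of_le zero_lt_one hn
    have hnq0 : (n : ℚ) ≠ 0 := ne_of_gt hnq
    -- the denominator of the slope
    have okDt : Ok ((y + y0 + W13.a₁ * x + 1) * t0 ^ 3) (1 / (n:ℚ) ^ 3 + 1 + 0 + 0) := by
      have hid : (y + y0 + W13.a₁ * x + 1) * t0 ^ 3
          = y * t0 ^ 3 + y0 * t0 ^ 3 + W13.a₁ * ((x * t0 ^ 2) * t0) + t0 ^ 3 := by ring
      have o1 : Ok (W13.a₁ * ((x * t0 ^ 2) * t0)) 0 := ok_small_mul v_a1_le okX.le_one v_t0_le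
      have o2 : Ok (t0 ^ 3) 0 := ok_t03
      exact (((okY.add okY1).add o1).add o2).congr hid.symm rfl
    have hq3 : (1 / (n:ℚ) ^ 3 + 1 + 0 + 0) ≠ 0 := by positivity
    have hD : y + y0 + W13.a₁ * x + 1 ≠ 0 := by
      intro h0
      exact okDt.ne_zero hq3 (by rw [h0, zero_mul])
    -- the sum is an affine point
    have hxy : x = x0 → y ≠ W13.negY x0 y0 := by
      intro hx hy
      apply hD
      rw [negY, a3_eq] at hy
      rw [hy, hx]
      ring
    have haddP : Point.some _ _ h + Point.some _ _ hR = Point.some _ _ (nonsingular_add h hR (fun hc => hxy hc.1 hc.2)) :=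
      add_some (fun hc => hxy hc.1 hc.2)
    -- the slope
    have heq : y ^ 2 + W13.a₁ * x * y + y = x ^ 3 := eqn_of h.1
    have heq0 : y0 ^ 2 + W13.a₁ * x0 * y0 + y0 = x0 ^ 3 := eqn_of hR.1
    have hLD : W13.slope x x0 y y0 * (y + y0 + W13.a₁ * x + 1)
        = x ^ 2 + x * x0 + x0 ^ 2 - W13.a₁ * y0 := by
      by_cases hx : x = x0
      · have hy' : y = y0 := Y_eq_of_Y_ne h.1 hR.1 hx (hxy hx)
        rw [slope_of_Y_ne hx (hxy hx), negY, a2_eq, a3_eq, a4_eq]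
        have hden : y - (-y - W13.a₁ * x - 1) = y + y0 + W13.a₁ * x + 1 := by
          rw [hy', hx]; ring
        rw [hden, div_mul_cancel₀ _ hD, hy', hx]
        ring
      · rw [slope_of_X_ne hx, div_mul_eq_mul_div, div_eq_iff (sub_ne_zero.mpr hx)]
        linear_combination heq - heq0
    have hLND : W13.slope x x0 y y0
        = (x ^ 2 + x * x0 + x0 ^ 2 - W13.a₁ * y0) / (y + y0 + W13.a₁ * x + 1) :=
      (eq_div_iff hD).mpr hLD
    -- numerator estimate
    have okN : Ok ((x ^ 2 + x * x0 + x0 ^ 2 - W13.a₁ * y0) * t0 ^ 4)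
        (1 / (n:ℚ) ^ 2 * (1 / (n:ℚ) ^ 2) + 1 / (n:ℚ) ^ 2 * 1 + 1 * 1 - 0) := by
      have hid : (x ^ 2 + x * x0 + x0 ^ 2 - W13.a₁ * y0) * t0 ^ 4
          = (x * t0 ^ 2) * (x * t0 ^ 2) + (x * t0 ^ 2) * (x0 * t0 ^ 2)
            + (x0 * t0 ^ 2) * (x0 * t0 ^ 2) - W13.a₁ * ((y0 * t0 ^ 3) * t0) := by ring
      have o3 : Ok (W13.a₁ * ((y0 * t0 ^ 3) * t0)) 0 := ok_small_mul v_a1_le okY1.le_one v_t0_le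
      exact ((((okX.mul okX).add (okX.mul okX1)).add (okX1.mul okX1)).sub o3).congr hid.symm rfl
    -- slope estimate
    have okLt : Ok (W13.slope x x0 y y0 * t0)
        ((1 / (n:ℚ) ^ 2 * (1 / (n:ℚ) ^ 2) + 1 / (n:ℚ) ^ 2 * 1 + 1 * 1 - 0)
          / (1 / (n:ℚ) ^ 3 + 1 + 0 + 0)) := by
      have hid : ((x ^ 2 + x * x0 + x0 ^ 2 - W13.a₁ * y0) * t0 ^ 4)
          / ((y + y0 + W13.a₁ * x + 1) * t0 ^ 3) = W13.slope x x0 y y0 * t0 := by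
        rw [show (x ^ 2 + x * x0 + x0 ^ 2 - W13.a₁ * y0) * t0 ^ 4
            = ((x ^ 2 + x * x0 + x0 ^ 2 - W13.a₁ * y0) * t0) * t0 ^ 3 by ring,
          mul_div_mul_right _ _ (pow_ne_zero 3 t0_ne_zero), hLND, div_mul_eq_mul_div]
      exact (okN.div okDt hq3).congr hid rfl
    -- new coordinates
    have okX3 : Ok (W13.addX x x0 (W13.slope x x0 y y0) * t0 ^ 2) (1 / ((n:ℚ) + 1) ^ 2) := by
      have hid : W13.addX x x0 (W13.slope x x0 y y0) * t0 ^ 2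
          = (W13.slope x x0 y y0 * t0) * (W13.slope x x0 y y0 * t0)
            + W13.a₁ * ((W13.slope x x0 y y0 * t0) * t0) - x * t0 ^ 2 - x0 * t0 ^ 2 := by
        rw [addX, a2_eq]; ring
      have o4 : Ok (W13.a₁ * ((W13.slope x x0 y y0 * t0) * t0)) 0 :=
        ok_small_mul v_a1_le okLt.le_one v_t0_le
      exact ((((okLt.mul okLt).add o4).sub okX).sub okX1).congr hid.symm (qlem1 hnq)
    have okY3 : Ok (W13.addY x x0 y (W13.slope x x0 y y0) * t0 ^ 3) (1 / ((n:ℚ) + 1) ^ 3) := by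
      have hid : W13.addY x x0 y (W13.slope x x0 y y0) * t0 ^ 3
          = -((W13.slope x x0 y y0 * t0) * (W13.addX x x0 (W13.slope x x0 y y0) * t0 ^ 2
                - x * t0 ^ 2))
            - y * t0 ^ 3 - W13.a₁ * ((W13.addX x x0 (W13.slope x x0 y y0) * t0 ^ 2) * t0)
            - t0 ^ 3 := by
        rw [addY, negAddY, negY, a3_eq]; ring
      have o5 : Ok (W13.a₁ * ((W13.addX x x0 (W13.slope x x0 y y0) * t0 ^ 2) * t0)) 0 :=
        ok_small_mul v_a1_le okX3.le_one v_t0_le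
      have o2 : Ok (t0 ^ 3) 0 := ok_t03
      exact ((((okLt.mul (okX3.sub okX)).neg.sub okY).sub o5).sub o2).congr hid.symm (qlem2 hnq)
    refine ⟨_, _, nonsingular_add h hR (fun hc => hxy hc.1 hc.2), ?_, ?_, ?_⟩
    · rw [succ_nsmul, hsm, haddP]
    · exact okX3.congr rfl (by push_cast; ring)
    · exact okY3.congr rfl (by push_cast; ring)

theorem torsion_free (hR : W13.Nonsingular x0 y0) (n : ℕ) (hn : 1 ≤ n) :
    n • (Point.some _ _ hR) ≠ 0 := by
  obtain ⟨x, y, h, hsm, _, _⟩ := key hR n hn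
  rw [hsm]
  exact some_ne_zero h


/-! ### the points of the statement -/

lemma a1_eq' : W13.a₁ = RatFunc.X ^ 2 + 5 := rfl

def xP : K := -(1 / 4) * (RatFunc.X ^ 4 + RatFunc.X ^ 2 + 1)
def yP : K := (1 / 8) * (RatFunc.X ^ 2 - RatFunc.X + 1) ^ 3

lemma ne_zero_of_eval_one {p : Polynomial ℚ} (h : p.eval 1 ≠ 0) : p ≠ 0 :=
  fun hc => h (by rw [hc]; simp)

lemma sum_sq_ne : (RatFunc.X ^ 4 + RatFunc.X ^ 2 + 1 : K) ≠ 0 := by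
  have : (RatFunc.X ^ 4 + RatFunc.X ^ 2 + 1 : K) = φ (X ^ 4 + X ^ 2 + 1) := by
    simp [φ, map_add, map_pow, RatFunc.algebraMap_X]
  rw [this]
  exact phi_ne (ne_zero_of_eval (by norm_num))

lemma xP_ne_zero' : (-(1 / 4) * (RatFunc.X ^ 4 + RatFunc.X ^ 2 + 1) : K) ≠ 0 :=
  mul_ne_zero (by norm_num) sum_sq_ne

lemma xP_ne_zero : xP ≠ 0 := by
  rw [xP]
  exact mul_ne_zero (by norm_num) sum_sq_ne

lemma ppK_ne : (RatFunc.X ^ 2 + RatFunc.X + 1 : K) ≠ 0 := by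
  have : (RatFunc.X ^ 2 + RatFunc.X + 1 : K) = φ pp := by
    simp [φ, pp, map_add, map_pow, RatFunc.algebraMap_X]
  rw [this]
  exact phi_ne pp_ne_zero

lemma x0_eq : x0 = (-2 * (RatFunc.X ^ 2 - RatFunc.X + 1))
    / ((RatFunc.X ^ 2 + RatFunc.X + 1) ^ 2) := by
  rw [x0, uu, pp]
  simp [φ, map_add, map_sub, map_pow, map_mul, map_neg, map_ofNat, RatFunc.algebraMap_X]

lemma y0_eq : y0 = 8 / ((RatFunc.X ^ 2 + RatFunc.X + 1) ^ 3) := by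
  rw [y0, pp]
  simp [φ, map_add, map_pow, map_ofNat, RatFunc.algebraMap_X]

lemma hPns : W13.Nonsingular xP yP := by
  rw [nonsingular_iff, equation_iff, a1_eq', a2_eq, a3_eq, a4_eq, a6_eq]
  constructor
  · rw [xP, yP]; ring
  · right
    intro hcon
    rw [xP, yP] at hcon
    have hzero : φ (3 * X ^ 5 + 7 * X ^ 3 + 3 * X) = 0 := by
      simp only [φ, map_add, map_mul, map_pow, map_ofNat, RatFunc.algebraMap_X]
      linear_combination (-4 : K) * hcon
    exact phi_ne (ne_zero_of_eval_one (by norm_num)) hzero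

lemma hQns : W13.Nonsingular 0 0 := by
  rw [nonsingular_iff, equation_iff, a1_eq', a2_eq, a3_eq, a4_eq, a6_eq]
  constructor
  · ring
  · right
    intro hcon
    exact one_ne_zero (by linear_combination hcon : (1 : K) = 0)

end Stmt13Aux

open Stmt13Aux

set_option maxHeartbeats 1000000 in
open Classical in
/-- `(0,0)` has exact order 3 and `(-¼(c⁴+c²+1), ⅛(c²-c+1)³)` lies on the curve
and has infinite order. -/
theorem stmt13 :
    ∃ h₀ : W13.Nonsingular 0 0,
      ∃ hP : W13.Nonsingular (-(1 / 4) * (RatFunc.X ^ 4 + RatFunc.X ^ 2 + 1))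
        ((1 / 8) * (RatFunc.X ^ 2 - RatFunc.X + 1) ^ 3),
      addOrderOf (WeierstrassCurve.Affine.Point.some _ _ h₀) = 3 ∧
      ¬ IsOfFinAddOrder (WeierstrassCurve.Affine.Point.some _ _ hP) := by
  refine ⟨hQns, hPns, ?_, ?_⟩
  · -- `(0,0)` has order exactly 3
    haveI : Fact (Nat.Prime 3) := ⟨by norm_num⟩
    have hy00 : (0 : K) ≠ W13.negY 0 0 := by
      rw [negY, a1_eq', a3_eq]
      intro hcon
      exact one_ne_zero (by linear_combination hcon : (1 : K) = 0)
    have h2Q : Point.some _ _ hQns + Point.some _ _ hQns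
        = Point.some _ _ (nonsingular_add hQns hQns fun hc => hy00 hc.2) := add_self_of_Y_ne hy00
    have hL0 : W13.slope 0 0 0 0 = 0 := by
      rw [slope_of_Y_ne rfl hy00, a1_eq', a2_eq, a4_eq]
      norm_num
    have hX2 : W13.addX 0 0 (W13.slope 0 0 0 0) = 0 := by
      rw [hL0, addX, a1_eq', a2_eq]; ring
    have hY2 : W13.addY 0 0 0 (W13.slope 0 0 0 0) = -1 := by
      rw [hL0, addY, negAddY, addX, negY, a1_eq', a2_eq, a3_eq]; ring
    have h3 : (3 : ℕ) • Point.some _ _ hQns = 0 := by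
      have e3 : (3 : ℕ) • Point.some _ _ hQns
          = Point.some _ _ hQns + Point.some _ _ hQns + Point.some _ _ hQns := by
        rw [show (3 : ℕ) = 2 + 1 from rfl, succ_nsmul, two_nsmul]
      rw [e3, h2Q]
      exact add_of_Y_eq hX2 (by rw [hY2, negY, a1_eq', a3_eq]; ring)
    exact addOrderOf_eq_prime h3 (some_ne_zero hQns)
  · -- the point `P` has infinite order
    intro hfin
    have hLp : W13.slope xP 0 yP 0 = yP / xP := by
      rw [slope_of_X_ne xP_ne_zero, sub_zero, sub_zero]
    have hLp2 : W13.slope xP 0 yP 0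
        = -(RatFunc.X ^ 2 - RatFunc.X + 1) ^ 2 / (2 * (RatFunc.X ^ 2 + RatFunc.X + 1)) := by
      rw [hLp, xP, yP, div_eq_div_iff xP_ne_zero' (mul_ne_zero (by norm_num) ppK_ne)]
      ring
    have hly : W13.slope xP 0 yP 0 * (2 * (RatFunc.X ^ 2 + RatFunc.X + 1))
        = -(RatFunc.X ^ 2 - RatFunc.X + 1) ^ 2 := by
      rw [hLp2]
      exact div_mul_cancel₀ _ (mul_ne_zero (by norm_num) ppK_ne)
    have hXc : W13.addX xP 0 (W13.slope xP 0 yP 0) = x0 := by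
      rw [x0_eq, eq_div_iff (pow_ne_zero 2 ppK_ne), addX, a1_eq', a2_eq]
      have expand : (W13.slope xP 0 yP 0 ^ 2 + (RatFunc.X ^ 2 + 5) * W13.slope xP 0 yP 0 - 0
            - xP - 0) * (RatFunc.X ^ 2 + RatFunc.X + 1) ^ 2
          = (1/4) * ((W13.slope xP 0 yP 0 * (2 * (RatFunc.X ^ 2 + RatFunc.X + 1)))
              * (W13.slope xP 0 yP 0 * (2 * (RatFunc.X ^ 2 + RatFunc.X + 1))))
            + (1/2) * ((RatFunc.X ^ 2 + 5) * ((W13.slope xP 0 yP 0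
              * (2 * (RatFunc.X ^ 2 + RatFunc.X + 1))) * (RatFunc.X ^ 2 + RatFunc.X + 1)))
            - xP * (RatFunc.X ^ 2 + RatFunc.X + 1) ^ 2 := by ring
      rw [expand, hly, xP]
      ring
    have hx0p : x0 * (RatFunc.X ^ 2 + RatFunc.X + 1) ^ 2 = -2 * (RatFunc.X ^ 2 - RatFunc.X + 1) := by
      rw [x0_eq]
      exact div_mul_cancel₀ _ (pow_ne_zero 2 ppK_ne)
    have hYc : W13.addY xP 0 yP (W13.slope xP 0 yP 0) = y0 := by
      rw [addY, negAddY, hXc, negY, a1_eq', a3_eq, y0_eq,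
        eq_div_iff (pow_ne_zero 3 ppK_ne)]
      have expand : (-(W13.slope xP 0 yP 0 * (x0 - xP) + yP) - (RatFunc.X ^ 2 + 5) * x0 - 1)
            * (RatFunc.X ^ 2 + RatFunc.X + 1) ^ 3
          = -((W13.slope xP 0 yP 0 * (2 * (RatFunc.X ^ 2 + RatFunc.X + 1)))
              * (((x0 * (RatFunc.X ^ 2 + RatFunc.X + 1) ^ 2)
                - xP * (RatFunc.X ^ 2 + RatFunc.X + 1) ^ 2) * (1/2)))
            - yP * (RatFunc.X ^ 2 + RatFunc.X + 1) ^ 3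
            - (RatFunc.X ^ 2 + 5) * (x0 * (RatFunc.X ^ 2 + RatFunc.X + 1) ^ 2)
              * (RatFunc.X ^ 2 + RatFunc.X + 1)
            - (RatFunc.X ^ 2 + RatFunc.X + 1) ^ 3 := by ring
      rw [expand, hly, hx0p, xP, yP]
      ring
    have haddPQ : Point.some _ _ hPns + Point.some _ _ hQns
        = Point.some _ _ (nonsingular_add hPns hQns fun hc => absurd hc.1 xP_ne_zero) :=
      add_of_X_ne xP_ne_zero
    have hRns : W13.Nonsingular x0 y0 := by
      rw [← hXc, ← hYc]
      exact nonsingular_add hPns hQns fun hc => absurd hc.1 xP_ne_zero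
    have hsum : Point.some _ _ hPns + Point.some _ _ hQns = Point.some _ _ hRns := by
      rw [haddPQ]
      exact some_eq_some hXc hYc _
    have hQfin : IsOfFinAddOrder (Point.some _ _ hQns) := by
      have h3' : (3 : ℕ) • Point.some _ _ hQns = 0 := by
        have hy00 : (0 : K) ≠ W13.negY 0 0 := by
          rw [negY, a1_eq', a3_eq]
          intro hcon
          exact one_ne_zero (by linear_combination hcon : (1 : K) = 0)
        have h2Q : Point.some _ _ hQns + Point.some _ _ hQns
            = Point.some _ _ (nonsingular_add hQns hQns fun hc => hy00 hc.2) := add_self_of_Y_ne hy00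
        have hL0 : W13.slope 0 0 0 0 = 0 := by
          rw [slope_of_Y_ne rfl hy00, a1_eq', a2_eq, a4_eq]
          norm_num
        have hX2 : W13.addX 0 0 (W13.slope 0 0 0 0) = 0 := by
          rw [hL0, addX, a1_eq', a2_eq]; ring
        have hY2 : W13.addY 0 0 0 (W13.slope 0 0 0 0) = -1 := by
          rw [hL0, addY, negAddY, addX, negY, a1_eq', a2_eq, a3_eq]; ring
        have e3 : (3 : ℕ) • Point.some _ _ hQns
            = Point.some _ _ hQns + Point.some _ _ hQns + Point.some _ _ hQns := by
          rw [show (3 : ℕ) = 2 + 1 from rfl, succ_nsmul, two_nsmul]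
        rw [e3, h2Q]
        exact add_of_Y_eq hX2 (by rw [hY2, negY, a1_eq', a3_eq]; ring)
      exact isOfFinAddOrder_iff_nsmul_eq_zero.mpr ⟨3, by norm_num, h3'⟩
    have hRfin : IsOfFinAddOrder (Point.some _ _ hRns) := by
      rw [← hsum]
      exact hfin.add hQfin
    obtain ⟨m, hm, hms⟩ := isOfFinAddOrder_iff_nsmul_eq_zero.mp hRfin
    exact torsion_free hRns m hm hms
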